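/- Let d ≥ 2 and let C = {c_1,...,c_p} be a set of colors disjoint from {1,2,3} with p ≥ d+1. Let P = v_0 v_1 ... v_{p+2} be a path with color lists L(v_0) = L_u ⊆ {1,2,3}, L(v_{p+2}) = L_v ⊆ {1,2,3}, a ∈ L_u, b ∈ L_v, L(v_1) = {a, c_1}, L(v_{p+1}) = {c_p, b}, and L(v_i) = {c_{i-1}, c_i} for 2 ≤ i ≤ p. Then there exists a list (d,k)-coloring γ of P with γ(v_0) = x and γ(v_{p+2}) = y if and only if x ∈ L_u, y ∈ L_v, and (x,y) ≠ (a,b). -/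
import Mathlib


/-- A list (d,k)-coloring of the path `v_0 v_1 … v_{p+2}` (vertices indexed by
`0, …, p+2`, distance between `i` and `j` is `|i - j|`) with color lists `L`. -/
def IsListPathColoring (p d : ℕ) (L : ℕ → Set ℕ) (γ : ℕ → ℕ) : Prop :=
  (∀ i ≤ p + 2, γ i ∈ L i) ∧
  ∀ i ≤ p + 2, ∀ j ≤ p + 2, i ≠ j → Nat.dist i j ≤ d → γ i ≠ γ j

theorem forbidding_path_admissible (d p : ℕ) (hd : 2 ≤ d) (hp : d + 1 ≤ p)
    (c : ℕ → ℕ)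
    (hcinj : ∀ i j, 1 ≤ i → i ≤ p → 1 ≤ j → j ≤ p → c i = c j → i = j)
    (hc : ∀ i, 1 ≤ i → i ≤ p → c i ∉ ({1, 2, 3} : Set ℕ))
    (Lu Lv : Set ℕ) (hLu : Lu ⊆ {1, 2, 3}) (hLv : Lv ⊆ {1, 2, 3})
    (a b : ℕ) (ha : a ∈ Lu) (hb : b ∈ Lv)
    (L : ℕ → Set ℕ) (hL0 : L 0 = Lu) (hLend : L (p + 2) = Lv)
    (hL1 : L 1 = {a, c 1}) (hLp1 : L (p + 1) = {c p, b})
    (hLmid : ∀ i, 2 ≤ i → i ≤ p → L i = {c (i - 1), c i}) :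
    ∀ x y : ℕ,
      (∃ γ : ℕ → ℕ, IsListPathColoring p d L γ ∧ γ 0 = x ∧ γ (p + 2) = y) ↔
      (x ∈ Lu ∧ y ∈ Lv ∧ (x, y) ≠ (a, b)) := by
  have ha3 : a ∈ ({1,2,3} : Set ℕ) := hLu ha
  have hb3 : b ∈ ({1,2,3} : Set ℕ) := hLv hb
  intro x y
  constructor
  · rintro ⟨γ, ⟨hmem, hdist⟩, h0, hend⟩
    have hxLu : x ∈ Lu := by
      have := hmem 0 (by omega); rwa [hL0, h0] at this
    have hyLv : y ∈ Lv := by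
      have := hmem (p+2) (by omega); rwa [hLend, hend] at this
    refine ⟨hxLu, hyLv, ?_⟩
    intro hxy
    injection hxy with hxa hyb
    have key : ∀ i, 1 ≤ i → i ≤ p → γ i = c i := by
      intro i h1
      induction i, h1 using Nat.le_induction with
      | base =>
        intro _
        have hm : γ 1 ∈ L 1 := hmem 1 (by omega)
        rw [hL1] at hm
        have hne : γ 0 ≠ γ 1 := hdist 0 (by omega) 1 (by omega) (by omega)
          (by simp [Nat.dist]; omega)
        rcases hm with h | h
        · exact absurd (by rw [h0, hxa, ← h]) hne
        · exact h
      | succ i h1 ih =>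
        intro hip
        have hm : γ (i+1) ∈ L (i+1) := hmem (i+1) (by omega)
        rw [hLmid (i+1) (by omega) hip] at hm
        have hne : γ i ≠ γ (i+1) := hdist i (by omega) (i+1) (by omega) (by omega)
          (by simp [Nat.dist]; omega)
        simp only [Nat.add_sub_cancel] at hm
        rcases hm with h | h
        · exact absurd (by rw [ih (by omega), ← h]) hne
        · exact h
    have hm : γ (p+1) ∈ L (p+1) := hmem (p+1) (by omega)
    rw [hLp1] at hm
    have hne2 : γ (p+1) ≠ γ (p+2) :=
      hdist (p+1) (by omega) (p+2) (by omega) (by omega) (by simp [Nat.dist]; omega)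
    have hp1 : γ (p+1) = c p := by
      rcases hm with h | h
      · exact h
      · exact absurd (by rw [h, hend, hyb]) hne2
    have hne3 : γ p ≠ γ (p+1) :=
      hdist p (by omega) (p+1) (by omega) (by omega) (by simp [Nat.dist]; omega)
    exact hne3 (by rw [key p (by omega) le_rfl, hp1])
  · rintro ⟨hx, hy, hxy⟩
    have hx3 : x ∈ ({1,2,3} : Set ℕ) := hLu hx
    have hy3 : y ∈ ({1,2,3} : Set ℕ) := hLv hy
    by_cases hyb : y = b
    · -- then x ≠ a; use γ 1 = a, γ i = c (i-1) for 2 ≤ i ≤ p+1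
      have hxa : x ≠ a := fun h => hxy (by rw [h, hyb])
      set g : ℕ → ℕ := fun n => if n = 0 then x else if n = 1 then a else
        if n = p + 2 then y else c (n - 1) with hg
      have g0 : g 0 = x := by simp [hg]
      have g1 : g 1 = a := by simp [hg]
      have gp2 : g (p+2) = y := by
        simp only [hg]; rw [if_neg (by omega), if_neg (by omega)]; simp
      have gmid : ∀ n, 2 ≤ n → n ≤ p + 1 → g n = c (n - 1) := by
        intro n h1 h2
        simp only [hg]; rw [if_neg (by omega), if_neg (by omega), if_neg (by omega)]
      refine ⟨g, ⟨?_, ?_⟩, g0, gp2⟩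
      · intro i hi
        by_cases h0 : i = 0
        · subst h0; rw [g0, hL0]; exact hx
        by_cases h1 : i = 1
        · subst h1; rw [g1, hL1]; left; rfl
        by_cases h2 : i = p + 2
        · subst h2; rw [gp2, hLend]; exact hy
        by_cases h3 : i = p + 1
        · subst h3
          rw [gmid (p+1) (by omega) le_rfl, hLp1, Nat.add_sub_cancel]; left; rfl
        · rw [gmid i (by omega) (by omega), hLmid i (by omega) (by omega)]; left; rfl
      · have main : ∀ i ≤ p + 2, ∀ j ≤ p + 2, i < j → j - i ≤ d → g i ≠ g j := by
          intro i hi j hj hij hdij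
          by_cases h0 : i = 0
          · subst h0
            rw [g0]
            by_cases h1 : j = 1
            · subst h1; rw [g1]; exact hxa
            · rw [gmid j (by omega) (by omega)]
              intro h; exact hc (j-1) (by omega) (by omega) (h ▸ hx3)
          by_cases h1 : i = 1
          · subst h1
            rw [g1, gmid j (by omega) (by omega)]
            intro h; exact hc (j-1) (by omega) (by omega) (h ▸ ha3)
          · rw [gmid i (by omega) (by omega)]
            by_cases h2 : j = p + 2
            · subst h2; rw [gp2]
              intro h; exact hc (i-1) (by omega) (by omega) (h ▸ hy3)
            · rw [gmid j (by omega) (by omega)]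
              intro h
              have := hcinj (i-1) (j-1) (by omega) (by omega) (by omega) (by omega) h
              omega
        intro i hi j hj hne hdij
        rcases Nat.lt_or_ge i j with h | h
        · exact main i hi j hj h (by simp [Nat.dist] at hdij; omega)
        · exact (main j hj i hi (by omega) (by simp [Nat.dist] at hdij; omega)).symm
    · -- use γ i = c i for 1 ≤ i ≤ p, γ (p+1) = b
      set g : ℕ → ℕ := fun n => if n = 0 then x else if n = p + 1 then b else
        if n = p + 2 then y else c n with hg
      have g0 : g 0 = x := by simp [hg]
      have gp1 : g (p+1) = b := by
        simp only [hg]; rw [if_neg (by omega)]; simp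
      have gp2 : g (p+2) = y := by
        simp only [hg]; rw [if_neg (by omega), if_neg (by omega)]; simp
      have gmid : ∀ n, 1 ≤ n → n ≤ p → g n = c n := by
        intro n h1 h2
        simp only [hg]; rw [if_neg (by omega), if_neg (by omega), if_neg (by omega)]
      refine ⟨g, ⟨?_, ?_⟩, g0, gp2⟩
      · intro i hi
        by_cases h0 : i = 0
        · subst h0; rw [g0, hL0]; exact hx
        by_cases h1 : i = p + 1
        · subst h1; rw [gp1, hLp1]; right; rfl
        by_cases h2 : i = p + 2
        · subst h2; rw [gp2, hLend]; exact hy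
        by_cases h3 : i = 1
        · subst h3; rw [gmid 1 le_rfl (by omega), hL1]; right; rfl
        · rw [gmid i (by omega) (by omega), hLmid i (by omega) (by omega)]; right; rfl
      · have main : ∀ i ≤ p + 2, ∀ j ≤ p + 2, i < j → j - i ≤ d → g i ≠ g j := by
          intro i hi j hj hij hdij
          by_cases h0 : i = 0
          · subst h0
            rw [g0, gmid j (by omega) (by omega)]
            intro h; exact hc j (by omega) (by omega) (h ▸ hx3)
          by_cases h1 : i = p + 1
          · subst h1
            have hj2 : j = p + 2 := by omega
            subst hj2
            rw [gp1, gp2]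
            exact fun h => hyb h.symm
          · rw [gmid i (by omega) (by omega)]
            by_cases h2 : j = p + 1
            · subst h2; rw [gp1]
              intro h; exact hc i (by omega) (by omega) (h ▸ hb3)
            by_cases h3 : j = p + 2
            · subst h3; rw [gp2]
              intro h; exact hc i (by omega) (by omega) (h ▸ hy3)
            · rw [gmid j (by omega) (by omega)]
              intro h
              have := hcinj i j (by omega) (by omega) (by omega) (by omega) h
              omega
        intro i hi j hj hne hdij
        rcases Nat.lt_or_ge i j with h | h
        · exact main i hi j hj h (by simp [Nat.dist] at hdij; omega)
        · exact (main j hj i hi (by omega) (by simp [Nat.dist] at hdij; omega)).symm
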